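/- For all natural numbers n, 2 * ∑_{k=0}^{n} C(n,k) * (-1)^k * w_k = (-1)^n * w_n + 1 (as integers), where w_k = ∑_{j=0}^{k} j! * S(k,j) are the ordered Bell numbers. -/

import Mathlib

open Finset

def stirling2 : ℕ → ℕ → ℕ
  | 0, 0 => 1
  | 0, _ + 1 => 0
  | _ + 1, 0 => 0
  | n + 1, k + 1 => (k + 1) * stirling2 n (k + 1) + stirling2 n k

def ob (n : ℕ) : ℕ := ∑ k ∈ range (n + 1), k.factorial * stirling2 n k

lemma stirling2_succ_zero (n : ℕ) : stirling2 (n + 1) 0 = 0 := rfl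

lemma stirling2_succ_succ (n k : ℕ) :
    stirling2 (n + 1) (k + 1) = (k + 1) * stirling2 n (k + 1) + stirling2 n k := rfl

lemma stirling2_one (n : ℕ) : stirling2 (n + 1) 1 = 1 := by
  induction n with
  | zero => rfl
  | succ n ih => rw [stirling2_succ_succ, ih, stirling2_succ_zero]

lemma stirling2_eq_zero : ∀ n j : ℕ, n < j → stirling2 n j = 0 := by
  intro n
  induction n with
  | zero => intro j h; match j, h with | j+1, _ => rfl
  | succ n ih =>
    intro j h
    match j, h with
    | j+1, h =>
      rw [stirling2_succ_succ, ih _ (by omega), ih _ (by omega)]; ring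

lemma L1 : ∀ n j : ℕ, ∑ k ∈ range (n + 1), n.choose k * stirling2 k j
    = stirling2 (n + 1) (j + 1) := by
  intro n
  induction n with
  | zero =>
    intro j
    rw [Finset.sum_range_one, stirling2_succ_succ,
      stirling2_eq_zero 0 (j+1) (by omega)]
    simp
  | succ n ih =>
    intro j
    rw [Finset.sum_range_succ']
    have e1 : ∀ k ∈ range (n+1), (n+1).choose (k+1) * stirling2 (k+1) j
        = n.choose (k+1) * stirling2 (k+1) j + n.choose k * stirling2 (k+1) j := by
      intro k _
      rw [Nat.choose_succ_succ', Nat.add_mul, Nat.add_comm]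
    rw [Finset.sum_congr rfl e1, Finset.sum_add_distrib]
    have hA : (∑ k ∈ range (n+1), n.choose (k+1) * stirling2 (k+1) j)
        + (n+1).choose 0 * stirling2 0 j = stirling2 (n+1) (j+1) := by
      rw [← ih j, Finset.sum_range_succ' (fun k => n.choose k * stirling2 k j) n,
        Finset.sum_range_succ]
      simp [Nat.choose_succ_self]
    rw [add_right_comm, hA]
    cases j with
    | zero =>
      have hB : ∑ k ∈ range (n+1), n.choose k * stirling2 (k+1) 0 = 0 := by
        apply Finset.sum_eq_zero; intro k _; rw [stirling2_succ_zero, Nat.mul_zero]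
      rw [hB, stirling2_one, stirling2_one]
    | succ j =>
      have hB : ∑ k ∈ range (n+1), n.choose k * stirling2 (k+1) (j+1)
          = (j+1) * stirling2 (n+1) (j+2) + stirling2 (n+1) (j+1) := by
        rw [← ih (j+1), ← ih j, Finset.mul_sum, ← Finset.sum_add_distrib]
        apply Finset.sum_congr rfl; intro k _
        rw [stirling2_succ_succ]; ring
      rw [hB, stirling2_succ_succ (n+1) (j+1)]
      ring

lemma R' (n : ℕ) : (∑ k ∈ range (n + 1), n.choose k * ob k) + stirling2 n 0 = 2 * ob n := by
  have h1 : ∑ k ∈ range (n + 1), n.choose k * ob k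
      = ∑ j ∈ range (n + 1), j.factorial * stirling2 (n + 1) (j + 1) := by
    have e : ∀ k ∈ range (n + 1), n.choose k * ob k
        = ∑ j ∈ range (n + 1), n.choose k * (j.factorial * stirling2 k j) := by
      intro k hk
      rw [ob, Finset.mul_sum]
      apply Finset.sum_subset
      · exact Finset.range_subset_range.2 (by simp at hk; omega)
      · intro j _ hj
        simp only [Finset.mem_range, not_lt] at hj
        rw [stirling2_eq_zero k j (by omega), Nat.mul_zero, Nat.mul_zero]
    rw [Finset.sum_congr rfl e, Finset.sum_comm]
    apply Finset.sum_congr rfl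
    intro j _
    rw [← L1 n j, Finset.mul_sum]
    apply Finset.sum_congr rfl
    intro k _; ring
  rw [h1]
  have e2 : ∀ j ∈ range (n + 1), j.factorial * stirling2 (n + 1) (j + 1)
      = (j + 1).factorial * stirling2 n (j + 1) + j.factorial * stirling2 n j := by
    intro j _
    rw [stirling2_succ_succ, Nat.factorial_succ]
    ring
  rw [Finset.sum_congr rfl e2, Finset.sum_add_distrib]
  have h3 : (∑ j ∈ range (n + 1), (j + 1).factorial * stirling2 n (j + 1)) + stirling2 n 0
      = ob n := by
    have h4 := Finset.sum_range_succ' (fun j => j.factorial * stirling2 n j) (n + 1)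
    simp only [Nat.factorial_zero, Nat.one_mul] at h4
    rw [← h4, Finset.sum_range_succ, stirling2_eq_zero n (n+1) (by omega)]
    simp [ob]
  have h6 : ∑ j ∈ range (n + 1), j.factorial * stirling2 n j = ob n := rfl
  omega

lemma L2 (n j : ℕ) (hj : j ≤ n) :
    ∑ k ∈ range (n + 1), (n.choose k : ℤ) * (k.choose j : ℤ) * (-1) ^ k
      = if j = n then (-1) ^ n else 0 := by
  rw [Finset.range_eq_Ico, ← Finset.sum_Ico_consecutive _ (Nat.zero_le j) (by omega)]
  have h0 : ∑ k ∈ Finset.Ico 0 j, (n.choose k : ℤ) * (k.choose j : ℤ) * (-1) ^ k = 0 := by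
    apply Finset.sum_eq_zero
    intro k hk
    simp only [Finset.mem_Ico] at hk
    rw [Nat.choose_eq_zero_of_lt hk.2]
    simp
  rw [h0, zero_add, Finset.sum_Ico_eq_sum_range]
  have hrange : n + 1 - j = (n - j) + 1 := by omega
  rw [hrange]
  have e : ∀ i ∈ range (n - j + 1),
      (n.choose (j + i) : ℤ) * ((j + i).choose j : ℤ) * (-1) ^ (j + i)
      = ((n.choose j : ℤ) * (-1) ^ j) * ((-1) ^ i * ((n - j).choose i : ℤ)) := by
    intro i hi
    simp only [Finset.mem_range] at hi
    have hc : n.choose (j + i) * (j + i).choose j = n.choose j * (n - j).choose i := by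
      have := Nat.choose_mul (n := n) (Nat.le_add_right j i)
      simpa using this
    have hc' : (n.choose (j + i) : ℤ) * ((j + i).choose j : ℤ) = (n.choose j : ℤ) * ((n - j).choose i : ℤ) := by
      exact_mod_cast congrArg (Nat.cast (R := ℤ)) hc
    rw [pow_add]
    calc (n.choose (j + i) : ℤ) * ((j + i).choose j : ℤ) * ((-1) ^ j * (-1) ^ i)
        = ((n.choose (j + i) : ℤ) * ((j + i).choose j : ℤ)) * ((-1) ^ j * (-1) ^ i) := by ring
      _ = ((n.choose j : ℤ) * ((n - j).choose i : ℤ)) * ((-1) ^ j * (-1) ^ i) := by rw [hc']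
      _ = _ := by ring
  rw [Finset.sum_congr rfl e, ← Finset.mul_sum, Int.alternating_sum_range_choose]
  rcases eq_or_lt_of_le hj with h | h
  · subst h
    simp
  · rw [if_neg (by omega), if_neg (by omega), mul_zero]

theorem stmt8 (n : ℕ) :
    2 * ∑ k ∈ range (n + 1), (n.choose k : ℤ) * (-1) ^ k * (ob k : ℤ)
      = (-1) ^ n * (ob n : ℤ) + 1 := by
  have key : ∀ k : ℕ, 2 * (ob k : ℤ)
      = (∑ j ∈ range (k + 1), (k.choose j : ℤ) * (ob j : ℤ)) + (stirling2 k 0 : ℤ) := by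
    intro k
    have := R' k
    have : ((∑ j ∈ range (k + 1), k.choose j * ob j : ℕ) : ℤ) + (stirling2 k 0 : ℤ)
        = 2 * (ob k : ℤ) := by exact_mod_cast congrArg (Nat.cast (R := ℤ)) this
    rw [← this, Nat.cast_sum]
    push_cast
    ring
  rw [Finset.mul_sum]
  have e1 : ∀ k ∈ range (n + 1), 2 * ((n.choose k : ℤ) * (-1) ^ k * (ob k : ℤ))
      = (∑ j ∈ range (n + 1), (n.choose k : ℤ) * (k.choose j : ℤ) * (-1) ^ k * (ob j : ℤ))
        + (n.choose k : ℤ) * (-1) ^ k * (stirling2 k 0 : ℤ) := by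
    intro k hk
    simp only [Finset.mem_range] at hk
    have h2 : 2 * ((n.choose k : ℤ) * (-1) ^ k * (ob k : ℤ))
        = (n.choose k : ℤ) * (-1) ^ k * (2 * (ob k : ℤ)) := by ring
    rw [h2, key k, mul_add, Finset.mul_sum]
    congr 1
    have hsub : ∑ j ∈ range (k + 1), (n.choose k : ℤ) * (k.choose j : ℤ) * (-1) ^ k * (ob j : ℤ)
        = ∑ j ∈ range (n + 1), (n.choose k : ℤ) * (k.choose j : ℤ) * (-1) ^ k * (ob j : ℤ) := by
      apply Finset.sum_subset
      · exact Finset.range_subset_range.2 (by omega)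
      · intro j _ hj
        simp only [Finset.mem_range, not_lt] at hj
        rw [Nat.choose_eq_zero_of_lt (show k < j by omega)]
        push_cast; ring
    rw [← hsub]
    apply Finset.sum_congr rfl
    intro j _; ring
  rw [Finset.sum_congr rfl e1, Finset.sum_add_distrib]
  have hS : ∑ k ∈ range (n + 1), (n.choose k : ℤ) * (-1) ^ k * (stirling2 k 0 : ℤ) = 1 := by
    rw [Finset.sum_eq_single_of_mem 0 (Finset.mem_range.2 (by omega))]
    · simp [stirling2]
    · intro k _ hk
      match k, hk with
      | k + 1, _ => rw [stirling2_succ_zero]; push_cast; ring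
  have hD : ∑ k ∈ range (n + 1), ∑ j ∈ range (n + 1),
      (n.choose k : ℤ) * (k.choose j : ℤ) * (-1) ^ k * (ob j : ℤ) = (-1) ^ n * (ob n : ℤ) := by
    rw [Finset.sum_comm]
    have e2 : ∀ j ∈ range (n + 1),
        ∑ k ∈ range (n + 1), (n.choose k : ℤ) * (k.choose j : ℤ) * (-1) ^ k * (ob j : ℤ)
        = (if j = n then (-1) ^ n else 0) * (ob j : ℤ) := by
      intro j hj
      simp only [Finset.mem_range] at hj
      rw [← L2 n j (by omega), Finset.sum_mul]
    rw [Finset.sum_congr rfl e2, Finset.sum_eq_single_of_mem n (Finset.mem_range.2 (by omega))]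
    · simp
    · intro j _ hj
      rw [if_neg hj, zero_mul]
  rw [hS, hD]
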